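/- If ν ∈ 𝒫(ℝ) is doubling with constant C on its support and supp ν is a uniformly perfect set with constant K, then ν is an (N,γ)-uniformly perfect measure for some N > 1 and γ > 0 depending only on K and C; explicitly, ν is (2(2K+1)+1, γ)-uniformly perfect with 2^γ = 1 + C^{−M}, where M = ⌈log₂((2K+1)+1)⌉. -/

import Mathlib

open MeasureTheory Filter Set Metric

/-- Topological support of a measure on ℝ. -/
noncomputable def mSupp (μ : Measure ℝ) : Set ℝ := {x | ∀ r > 0, 0 < μ (ball x r)}

/-- A compactly supported Borel probability measure on ℝ (an element of 𝒫(ℝ)). -/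
def IsCptProb (μ : Measure ℝ) : Prop :=
  IsProbabilityMeasure μ ∧ ∃ K : Set ℝ, IsCompact K ∧ μ Kᶜ = 0

/-- ν is (N,γ)-uniformly perfect: ν(B(x,Nr)) ≥ 2^γ ν(B(x,r)) whenever
x ∈ ℝ, r > 0 and supp ν ⊄ B(x,Nr). -/
def UnifPerfMeas (ν : Measure ℝ) (N γ : ℝ) : Prop :=
  ∀ x : ℝ, ∀ r > 0, ¬ mSupp ν ⊆ ball x (N * r) →
    ENNReal.ofReal (2 ^ γ) * ν (ball x r) ≤ ν (ball x (N * r))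

/-- A ⊆ ℝ is uniformly perfect with constant K: whenever x ∈ A, r > 0 and
A ⊄ B(x,Kr), then A ∩ (B(x,Kr) \ B(x,r)) ≠ ∅. -/
def UnifPerfSet (A : Set ℝ) (K : ℝ) : Prop :=
  ∀ x ∈ A, ∀ r > 0, ¬ A ⊆ ball x (K * r) → (A ∩ (ball x (K * r) \ ball x r)).Nonempty

/-- ν is doubling with constant C on its support: ν(B(x,2r)) ≤ C ν(B(x,r)) for all
x ∈ supp ν and r > 0. -/
def DoublingOn (ν : Measure ℝ) (C : ℝ) : Prop :=
  ∀ x ∈ mSupp ν, ∀ r > 0, ν (ball x (2 * r)) ≤ ENNReal.ofReal C * ν (ball x r)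

private lemma null_of_not_mSupp (ν : Measure ℝ) (s : Set ℝ)
    (h : ∀ a ∈ s, a ∉ mSupp ν) : ν s = 0 := by
  refine measure_null_of_locally_null s fun a ha => ?_
  have h2 := h a ha
  simp only [mSupp, mem_setOf_eq] at h2
  push_neg at h2
  obtain ⟨r, hr, h0⟩ := h2
  exact ⟨ball a r, mem_nhdsWithin_of_mem_nhds (ball_mem_nhds a hr),
    le_antisymm h0 zero_le⟩

private lemma doubling_chain (ν : Measure ℝ) (C : ℝ) (hd : DoublingOn ν C)
    (z : ℝ) (hz : z ∈ mSupp ν) (ρ : ℝ) (hρ : 0 < ρ) :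
    ∀ m : ℕ, ν (ball z (2 ^ m * ρ)) ≤ (ENNReal.ofReal C) ^ m * ν (ball z ρ) := by
  intro m
  induction m with
  | zero => simp
  | succ n ih =>
    have h2 : (2:ℝ) ^ (n+1) * ρ = 2 * (2 ^ n * ρ) := by ring
    rw [h2, pow_succ]
    calc ν (ball z (2 * (2 ^ n * ρ)))
        ≤ ENNReal.ofReal C * ν (ball z (2 ^ n * ρ)) := hd z hz _ (by positivity)
      _ ≤ ENNReal.ofReal C * ((ENNReal.ofReal C) ^ n * ν (ball z ρ)) :=
          mul_le_mul_right ih _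
      _ = (ENNReal.ofReal C) ^ n * ENNReal.ofReal C * ν (ball z ρ) := by ring

/-- Lemma 4.5: if ν ∈ 𝒫(ℝ) is doubling with constant C on its support
and supp ν is uniformly perfect with constant K, then ν is (N,γ)-uniformly perfect with
N = 2(2K+1)+1 > 1 and γ = log₂(1 + C^{−M}) > 0, where M = ⌈log₂((2K+1)+1)⌉. -/
theorem doubling_to_unif_perf (ν : Measure ℝ) (hν : IsCptProb ν) (K C : ℝ) (hK : 1 < K)
    (hd : DoublingOn ν C) (hup : UnifPerfSet (mSupp ν) K) :
    1 < 2 * (2 * K + 1) + 1 ∧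
    0 < Real.logb 2 (1 + C ^ (-(⌈Real.logb 2 ((2 * K + 1) + 1)⌉ : ℤ))) ∧
    UnifPerfMeas ν (2 * (2 * K + 1) + 1)
      (Real.logb 2 (1 + C ^ (-(⌈Real.logb 2 ((2 * K + 1) + 1)⌉ : ℤ)))) := by
  have hprob : IsProbabilityMeasure ν := hν.1
  set t : ℝ := Real.logb 2 ((2 * K + 1) + 1) with ht_def
  set M : ℤ := ⌈t⌉ with hM_def
  have hK0 : (0:ℝ) < K := by linarith
  have h2K2 : (1:ℝ) < (2 * K + 1) + 1 := by linarith
  have ht_pos : 0 < t := Real.logb_pos one_lt_two h2K2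
  have hM_pos : 0 < M := Int.ceil_pos.mpr ht_pos
  set m : ℕ := M.toNat with hm_def
  have hMm : (m : ℤ) = M := Int.toNat_of_nonneg hM_pos.le
  have h2m : (2 * K + 1) + 1 ≤ (2:ℝ) ^ m := by
    have h1 : ((2 * K + 1) + 1 : ℝ) = (2:ℝ) ^ t :=
      (Real.rpow_logb two_pos (by norm_num) (by linarith)).symm
    have h2 : (2:ℝ) ^ t ≤ (2:ℝ) ^ (M:ℝ) :=
      Real.rpow_le_rpow_of_exponent_le one_le_two (Int.le_ceil t)
    have h3 : (2:ℝ) ^ (M:ℝ) = (2:ℝ) ^ m := by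
      rw [← hMm]; push_cast; rw [Real.rpow_natCast]
    rw [h1]; rw [h3] at h2; exact h2
  -- support is nonempty, hence C > 0
  have hsupp_ne : (mSupp ν).Nonempty := by
    by_contra h
    rw [not_nonempty_iff_eq_empty] at h
    have h0 : ν univ = 0 :=
      null_of_not_mSupp ν univ (fun a _ => by rw [h]; exact notMem_empty a)
    simp [measure_univ] at h0
  obtain ⟨w, hw⟩ := hsupp_ne
  have hC_pos : 0 < C := by
    by_contra hC
    push_neg at hC
    have h1 : ν (ball w (2 * 1)) ≤ ENNReal.ofReal C * ν (ball w 1) := hd w hw 1 one_pos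
    rw [ENNReal.ofReal_eq_zero.mpr hC, zero_mul, nonpos_iff_eq_zero] at h1
    have h3 : 0 < ν (ball w 1) := hw 1 one_pos
    have h4 : ν (ball w 1) ≤ ν (ball w (2 * 1)) :=
      measure_mono (ball_subset_ball (by norm_num))
    rw [h1] at h4
    exact absurd h4 h3.not_ge
  have ha_pos : 0 < C ^ (-M) := zpow_pos hC_pos _
  have hγ_pos : 0 < Real.logb 2 (1 + C ^ (-M)) :=
    Real.logb_pos one_lt_two (by linarith)
  have h2γ : (2:ℝ) ^ Real.logb 2 (1 + C ^ (-M)) = 1 + C ^ (-M) :=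
    Real.rpow_logb two_pos (by norm_num) (by linarith)
  have hzpow_one : C ^ (-M) * C ^ m = 1 := by
    rw [← zpow_natCast C m, hMm, ← zpow_add₀ hC_pos.ne', neg_add_cancel, zpow_zero]
  refine ⟨by linarith, hγ_pos, ?_⟩
  intro x r hr hns
  rcases eq_or_ne (ν (ball x r)) 0 with hz0 | hz0
  · rw [hz0, mul_zero]; exact zero_le
  have hpos : 0 < ν (ball x r) := pos_iff_ne_zero.mpr hz0
  -- a support point y in B(x,r)
  obtain ⟨y, hy_supp, hy_ball⟩ : ∃ y, y ∈ mSupp ν ∧ y ∈ ball x r := by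
    by_contra h
    push_neg at h
    exact hz0 (null_of_not_mSupp ν (ball x r) (fun a ha hm => h a hm ha))
  have hdyx : dist y x < r := mem_ball.mp hy_ball
  set s : ℝ := (2 * K + 1) / K * r with hs_def
  have hs_pos : 0 < s := by positivity
  have hKs : K * s = (2 * K + 1) * r := by
    rw [hs_def]; field_simp
  -- supp ν is not inside B(y, K s)
  have hnsub : ¬ mSupp ν ⊆ ball y (K * s) := by
    intro hsub
    apply hns
    intro p hp
    have h1 : dist p y < K * s := mem_ball.mp (hsub hp)
    rw [hKs] at h1
    rw [mem_ball]
    calc dist p x ≤ dist p y + dist y x := dist_triangle p y x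
      _ < (2 * K + 1) * r + r := by linarith
      _ ≤ (2 * (2 * K + 1) + 1) * r := by nlinarith
  obtain ⟨z, hz_supp, hz_mem⟩ := hup y hy_supp s hs_pos hnsub
  obtain ⟨hzK, hzs⟩ := hz_mem
  have hdzy_lt : dist z y < (2 * K + 1) * r := by
    have := mem_ball.mp hzK; rwa [hKs] at this
  have hdzy_ge : s ≤ dist z y := not_lt.mp (fun h => hzs (mem_ball.mpr h))
  set D : ℝ := dist z x with hD_def
  have hD_lt : D < (2 * K + 2) * r := by
    have := dist_triangle z y x
    rw [hD_def]; linarith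
  have hD_gt : s - r < D := by
    have h1 := dist_triangle z x y
    rw [dist_comm x y] at h1
    rw [hD_def]; linarith
  have hKD : (K + 1) * r < K * D := by
    have := mul_lt_mul_of_pos_left hD_gt hK0
    rw [mul_sub, hKs] at this
    linarith
  have hDr : r < D := by nlinarith
  have hρ : 0 < D - r := by linarith
  -- key inequality: (2K+2)(D-r) ≥ D + r
  have hkey : r + D ≤ ((2 * K + 1) + 1) * (D - r) := by nlinarith
  -- disjointness
  have hdisj : Disjoint (ball x r) (ball z (D - r)) := by
    rw [Set.disjoint_left]
    intro v hv1 hv2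
    rw [mem_ball] at hv1 hv2
    have h1 := dist_triangle z v x
    rw [dist_comm z v] at h1
    rw [← hD_def] at h1
    linarith
  -- the small ball lies inside B(x, Nr)
  have hsub1 : ball z (D - r) ⊆ ball x ((2 * (2 * K + 1) + 1) * r) := by
    intro v hv
    rw [mem_ball] at hv ⊢
    have h1 := dist_triangle v z x
    rw [← hD_def] at h1
    nlinarith
  -- B(x,r) sits inside the 2^m-fold enlargement of the small ball
  have hsub2 : ball x r ⊆ ball z (2 ^ m * (D - r)) := by
    intro v hv
    rw [mem_ball] at hv ⊢
    have h1 := dist_triangle v x z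
    rw [dist_comm x z, ← hD_def] at h1
    have h2 : ((2 * K + 1) + 1) * (D - r) ≤ 2 ^ m * (D - r) :=
      mul_le_mul_of_nonneg_right h2m (by linarith)
    linarith
  -- measure estimates
  have hchain : ν (ball z (2 ^ m * (D - r))) ≤ (ENNReal.ofReal C) ^ m * ν (ball z (D - r)) :=
    doubling_chain ν C hd z hz_supp _ hρ m
  have hxr_le : ν (ball x r) ≤ ν (ball z (2 ^ m * (D - r))) := measure_mono hsub2
  have key : ENNReal.ofReal (C ^ (-M)) * ν (ball x r) ≤ ν (ball z (D - r)) := by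
    calc ENNReal.ofReal (C ^ (-M)) * ν (ball x r)
        ≤ ENNReal.ofReal (C ^ (-M)) * ((ENNReal.ofReal C) ^ m * ν (ball z (D - r))) :=
          mul_le_mul_right (hxr_le.trans hchain) _
      _ = (ENNReal.ofReal (C ^ (-M)) * (ENNReal.ofReal C) ^ m) * ν (ball z (D - r)) := by
          rw [mul_assoc]
      _ = ν (ball z (D - r)) := by
          rw [← ENNReal.ofReal_pow hC_pos.le, ← ENNReal.ofReal_mul ha_pos.le,
            hzpow_one, ENNReal.ofReal_one, one_mul]
  have hofReal : ENNReal.ofReal (2 ^ Real.logb 2 (1 + C ^ (-M)))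
      = 1 + ENNReal.ofReal (C ^ (-M)) := by
    rw [h2γ, ENNReal.ofReal_add zero_le_one ha_pos.le, ENNReal.ofReal_one]
  rw [hofReal, add_mul, one_mul]
  have hunion : ν (ball x r) + ν (ball z (D - r)) ≤ ν (ball x ((2 * (2 * K + 1) + 1) * r)) := by
    rw [← measure_union hdisj measurableSet_ball]
    exact measure_mono (union_subset (ball_subset_ball (by nlinarith)) hsub1)
  calc ν (ball x r) + ENNReal.ofReal (C ^ (-M)) * ν (ball x r)
      ≤ ν (ball x r) + ν (ball z (D - r)) := add_le_add_right key _
    _ ≤ _ := hunion
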